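/- Convergence of iterated LPA to the oracle: with the notation above, writing A_𝒮 for the stacked matrix with block rows (I_n − P_{s_i})R_i, the powers M_A^k converge as k → ∞ to the orthogonal projector onto ker A_𝒮. Consequently, iterating the patch-averaging map on any y ∈ ℝ^N converges to the orthogonal projection of y onto ker A_𝒮. -/

import Mathlib

open Matrix

noncomputable section

/-- Cyclic patch-extraction operator: extracts the `n` consecutive coordinates of a signal of
length `N` starting at position `i`, indices taken modulo `N`. -/
def Rop (N n : ℕ) (i : Fin N) : Matrix (Fin n) (Fin N) ℝ :=
  Matrix.of fun k j => if (j : ℕ) = ((i : ℕ) + (k : ℕ)) % N then 1 else 0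

/-- Global convolutional dictionary: horizontal concatenation of the blocks `(1/n) • Rᵢᵀ D`. -/
def DG (N n m : ℕ) (D : Matrix (Fin n) (Fin m) ℝ) : Matrix (Fin N) (Fin N × Fin m) ℝ :=
  Matrix.of fun x p => ((1 / (n : ℝ)) • ((Rop N n p.1)ᵀ * D)) x p.2

/-- `Qᵢ` places `D` in block position `i` and zeros elsewhere. -/
def Qop (N n m : ℕ) (D : Matrix (Fin n) (Fin m) ℝ) (i : Fin N) :
    Matrix (Fin n) (Fin N × Fin m) ℝ :=
  Matrix.of fun k p => if p.1 = i then D k p.2 else 0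

/-- Patch-agreement constraint matrix `M`: block rows `Qᵢ - Rᵢ D_G`. -/
def Mop (N n m : ℕ) (D : Matrix (Fin n) (Fin m) ℝ) :
    Matrix (Fin N × Fin n) (Fin N × Fin m) ℝ :=
  Matrix.of fun q p => (Qop N n m D q.1 - Rop N n q.1 * DG N n m D) q.2 p

/-- Bottom extraction operator `S_B = [0  I_{n-1}]`. -/
def SBop (n : ℕ) : Matrix (Fin (n - 1)) (Fin n) ℝ :=
  Matrix.of fun r j => if (j : ℕ) = (r : ℕ) + 1 then 1 else 0

/-- Top extraction operator `S_T = [I_{n-1}  0]`. -/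
def STop (n : ℕ) : Matrix (Fin (n - 1)) (Fin n) ℝ :=
  Matrix.of fun r j => if (j : ℕ) = (r : ℕ) then 1 else 0

/-- `ℓ₀` pseudo-norm: the number of nonzero entries. -/
def l0 {m : ℕ} (α : Fin m → ℝ) : ℕ := (Function.support α).ncard

/-- The support of a vector, as a `Finset`. -/
def suppF {m : ℕ} (α : Fin m → ℝ) : Finset (Fin m) :=
  (Set.toFinite (Function.support α)).toFinset

/-- The spark of a dictionary: the minimal number of linearly dependent columns (`⊤` if the
columns are linearly independent). -/
def spark {n m : ℕ} (D : Matrix (Fin n) (Fin m) ℝ) : ℕ∞ :=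
  sInf {j : ℕ∞ | ∃ s : Finset (Fin m), (s.card : ℕ∞) = j ∧
    (D.submatrix id (fun a : {a // a ∈ s} => (a : Fin m))).rank < s.card}

/-- The globalized spark relative to a family `T` of allowed supports. -/
def gspark {n m : ℕ} (D : Matrix (Fin n) (Fin m) ℝ) (T : Set (Finset (Fin m))) : ℕ∞ :=
  sInf {j : ℕ∞ | ∃ s₁ ∈ T, ∃ s₂ ∈ T, (((s₁ ∪ s₂).card : ℕ) : ℕ∞) = j ∧
    (D.submatrix id (fun a : {a // a ∈ s₁ ∪ s₂} => (a : Fin m))).rank < (s₁ ∪ s₂).card}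
open scoped RealInnerProductSpace

lemma toEuclideanLin_matmul_apply {α β γ : Type*} [Fintype α] [Fintype β] [Fintype γ]
    [DecidableEq β] [DecidableEq γ]
    (A : Matrix α β ℝ) (B : Matrix β γ ℝ) (x : EuclideanSpace ℝ γ) :
    Matrix.toEuclideanLin (A * B) x = Matrix.toEuclideanLin A (Matrix.toEuclideanLin B x) := by
  simp [Matrix.toEuclideanLin_apply, Matrix.mulVec_mulVec]

lemma inner_toEuclideanLin_transpose_mul_self {α β : Type*} [Fintype α] [Fintype β]
    [DecidableEq α] [DecidableEq β]
    (A : Matrix α β ℝ) (x : EuclideanSpace ℝ β) :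
    ⟪x, Matrix.toEuclideanLin (Aᵀ * A) x⟫ = ‖Matrix.toEuclideanLin A x‖ ^ 2 := by
  rw [toEuclideanLin_matmul_apply, ← Matrix.conjTranspose_eq_transpose_of_trivial,
    Matrix.toEuclideanLin_conjTranspose_eq_adjoint, LinearMap.adjoint_inner_right,
    real_inner_self_eq_norm_sq]

set_option maxHeartbeats 2000000 in
/-- Convergence of iterated LPA to the oracle: `M_A^k` converges to the orthogonal projector
onto `ker A_𝒮`; consequently iterated patch averaging of any `y` converges to the orthogonal
projection of `y` onto `ker A_𝒮`. -/
theorem iterated_LPA_converges (n N : ℕ) (hn : 0 < n) (hdvd : n ∣ N)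
    (P : Fin N → Matrix (Fin n) (Fin n) ℝ)
    (hPsym : ∀ i, (P i)ᵀ = P i) (hPidem : ∀ i, P i * P i = P i)
    (MA : Matrix (Fin N) (Fin N) ℝ)
    (hMA : MA = (1 / (n : ℝ)) • ∑ i, (Rop N n i)ᵀ * P i * Rop N n i)
    (AS : Matrix (Fin N × Fin n) (Fin N) ℝ)
    (hAS : AS = Matrix.of fun q j => (((1 - P q.1) * Rop N n q.1 : Matrix (Fin n) (Fin N) ℝ) q.2 j))
    (K : Submodule ℝ (EuclideanSpace ℝ (Fin N)))
    (hK : K = LinearMap.ker (Matrix.toEuclideanLin AS)) :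
    Filter.Tendsto (fun k => Matrix.toEuclideanCLM (𝕜 := ℝ) (MA ^ k)) Filter.atTop
        (nhds (K.subtypeL.comp (Submodule.orthogonalProjection K))) ∧
      ∀ y : EuclideanSpace ℝ (Fin N),
        Filter.Tendsto (fun k => Matrix.toEuclideanCLM (𝕜 := ℝ) (MA ^ k) y) Filter.atTop
          (nhds ((Submodule.orthogonalProjection K y : K) : EuclideanSpace ℝ (Fin N))) := by
  classical
  rcases Nat.eq_zero_or_pos N with hN0 | hNpos
  · subst hN0
    have hsub : Subsingleton (EuclideanSpace ℝ (Fin 0)) :=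
      ⟨fun a b => PiLp.ext fun i => i.elim0⟩
    constructor
    · have h : ∀ k : ℕ, Matrix.toEuclideanCLM (𝕜 := ℝ) (MA ^ k)
          = K.subtypeL.comp (Submodule.orthogonalProjection K) :=
        fun k => ContinuousLinearMap.ext fun x => Subsingleton.elim _ _
      simp only [h]
      exact tendsto_const_nhds
    · intro y
      have h : ∀ k : ℕ, Matrix.toEuclideanCLM (𝕜 := ℝ) (MA ^ k) y
          = ((Submodule.orthogonalProjection K y : K) : EuclideanSpace ℝ (Fin 0)) :=
        fun k => Subsingleton.elim _ _
      simp only [h]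
      exact tendsto_const_nhds
  haveI : NeZero N := ⟨hNpos.ne'⟩
  have hnR : (n : ℝ) ≠ 0 := Nat.cast_ne_zero.mpr hn.ne'
  -- key counting lemma
  have key : ∀ (k : Fin n) (j l : Fin N),
      (∑ i : Fin N, (if (j : ℕ) = ((i : ℕ) + (k : ℕ)) % N then (1 : ℝ) else 0) *
        (if (l : ℕ) = ((i : ℕ) + (k : ℕ)) % N then (1 : ℝ) else 0)) =
        if j = l then 1 else 0 := by
    intro k j l
    have hk' : (k : ℕ) % N < N := Nat.mod_lt _ hNpos
    set k' : Fin N := ⟨(k : ℕ) % N, hk'⟩ with hk'def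
    have hmod : ∀ i : Fin N, ((i : ℕ) + (k : ℕ)) % N = ((i + k' : Fin N) : ℕ) := by
      intro i
      have h1 : ((i : ℕ) + (k : ℕ)) % N = ((i : ℕ) % N + (k : ℕ) % N) % N := Nat.add_mod _ _ _
      rw [h1, Nat.mod_eq_of_lt i.isLt, Fin.add_def]
    rw [Finset.sum_eq_single (j - k')]
    · have h1 : (j - k') + k' = j := sub_add_cancel j k'
      rw [hmod, h1]
      simp only [if_pos rfl, one_mul]
      by_cases hjl : j = l
      · simp [hjl]
      · have : (l : ℕ) ≠ (j : ℕ) := fun h => hjl (Fin.val_injective h).symm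
        simp [this, hjl]
    · intro i _ hi
      rw [hmod]
      have hne : (j : ℕ) ≠ ((i + k' : Fin N) : ℕ) := by
        intro h
        apply hi
        have hj : j = i + k' := Fin.val_injective h
        rw [hj]
        simp
      simp [hne]
    · intro h; exact absurd (Finset.mem_univ _) h
  -- ∑ RᵀR = n • 1
  have hRR : (∑ i : Fin N, (Rop N n i)ᵀ * Rop N n i)
      = (n : ℝ) • (1 : Matrix (Fin N) (Fin N) ℝ) := by
    ext j l
    simp only [Matrix.sum_apply, Matrix.mul_apply, Matrix.transpose_apply, Rop, Matrix.of_apply,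
      Matrix.smul_apply, Matrix.one_apply, smul_eq_mul]
    rw [Finset.sum_comm]
    rw [Finset.sum_congr rfl fun k _ => key k j l]
    simp [Finset.sum_const, mul_comm]
  -- ASᵀ AS = ∑ BᵢᵀBᵢ
  have hASAS : ASᵀ * AS = ∑ i : Fin N,
      (((1 : Matrix (Fin n) (Fin n) ℝ) - P i) * Rop N n i)ᵀ *
        (((1 : Matrix (Fin n) (Fin n) ℝ) - P i) * Rop N n i) := by
    ext j l
    rw [Matrix.mul_apply, Fintype.sum_prod_type]
    simp only [Matrix.transpose_apply, Matrix.sum_apply, Matrix.mul_apply, hAS, Matrix.of_apply]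
  -- BᵢᵀBᵢ = RᵀR - RᵀPR
  have hB : ∀ i : Fin N,
      (((1 : Matrix (Fin n) (Fin n) ℝ) - P i) * Rop N n i)ᵀ *
        (((1 : Matrix (Fin n) (Fin n) ℝ) - P i) * Rop N n i)
      = (Rop N n i)ᵀ * Rop N n i - (Rop N n i)ᵀ * P i * Rop N n i := by
    intro i
    have h1 : ((1 : Matrix (Fin n) (Fin n) ℝ) - P i)ᵀ = 1 - P i := by
      rw [Matrix.transpose_sub, Matrix.transpose_one, hPsym]
    have h2 : ((1 : Matrix (Fin n) (Fin n) ℝ) - P i) * (1 - P i) = 1 - P i := by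
      rw [Matrix.sub_mul, Matrix.one_mul, Matrix.mul_sub, Matrix.mul_one, hPidem, sub_self,
        sub_zero]
    rw [Matrix.transpose_mul, h1, Matrix.mul_assoc, ← Matrix.mul_assoc (1 - P i), h2,
      Matrix.sub_mul, Matrix.one_mul, Matrix.mul_sub, ← Matrix.mul_assoc]
  have hS : (∑ i, (Rop N n i)ᵀ * P i * Rop N n i) = (n : ℝ) • MA := by
    rw [hMA, smul_smul, mul_one_div, div_self hnR, one_smul]
  have hid : ASᵀ * AS = (n : ℝ) • (1 : Matrix (Fin N) (Fin N) ℝ) - (n : ℝ) • MA := by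
    rw [hASAS, Finset.sum_congr rfl fun i _ => hB i, Finset.sum_sub_distrib, hRR, hS]
  -- operator-level consequences
  have hMAlin : ∀ x : EuclideanSpace ℝ (Fin N),
      Matrix.toEuclideanLin (ASᵀ * AS) x
        = (n : ℝ) • x - (n : ℝ) • Matrix.toEuclideanLin MA x := by
    intro x
    rw [hid, map_sub, LinearMap.sub_apply, _root_.map_smul, _root_.map_smul,
      LinearMap.smul_apply, LinearMap.smul_apply]
    simp [Matrix.toEuclideanLin_apply, Matrix.one_mulVec]
  have hq : ∀ x : EuclideanSpace ℝ (Fin N),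
      ‖Matrix.toEuclideanLin AS x‖ ^ 2
        = (n : ℝ) * (⟪x, x⟫ - ⟪x, Matrix.toEuclideanLin MA x⟫) := by
    intro x
    rw [← inner_toEuclideanLin_transpose_mul_self, hMAlin x, inner_sub_right,
      real_inner_smul_right, real_inner_smul_right, mul_sub]
  have hfix : ∀ x : EuclideanSpace ℝ (Fin N),
      Matrix.toEuclideanLin MA x = x ↔ x ∈ K := by
    intro x
    rw [hK, LinearMap.mem_ker]
    constructor
    · intro h
      have h0 : ‖Matrix.toEuclideanLin AS x‖ ^ 2 = 0 := by rw [hq x, h]; ring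
      exact norm_eq_zero.mp (pow_eq_zero_iff two_ne_zero |>.mp h0)
    · intro h
      have h2 : Matrix.toEuclideanLin (ASᵀ * AS) x = 0 := by
        rw [toEuclideanLin_matmul_apply, h, map_zero]
      rw [hMAlin] at h2
      have h3 : (n : ℝ) • x = (n : ℝ) • Matrix.toEuclideanLin MA x := (sub_eq_zero.mp h2)
      exact (smul_right_injective _ hnR h3).symm
  -- quadratic form bounds
  have hCC : ∀ i, (Rop N n i)ᵀ * P i * Rop N n i
      = (P i * Rop N n i)ᵀ * (P i * Rop N n i) := by
    intro i
    conv_rhs => rw [Matrix.transpose_mul, hPsym, Matrix.mul_assoc,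
      ← Matrix.mul_assoc (P i), hPidem, ← Matrix.mul_assoc]
  have qlow : ∀ x : EuclideanSpace ℝ (Fin N), 0 ≤ ⟪x, Matrix.toEuclideanLin MA x⟫ := by
    intro x
    rw [hMA]
    have hexp : ⟪x, Matrix.toEuclideanLin
          ((1 / (n : ℝ)) • ∑ i, (Rop N n i)ᵀ * P i * Rop N n i) x⟫
        = (1 / (n : ℝ)) * ∑ i, ‖Matrix.toEuclideanLin (P i * Rop N n i) x‖ ^ 2 := by
      rw [_root_.map_smul, LinearMap.smul_apply, real_inner_smul_right, map_sum,
        LinearMap.coe_sum, Finset.sum_apply, inner_sum]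
      congr 1
      refine Finset.sum_congr rfl fun i _ => ?_
      rw [hCC i, inner_toEuclideanLin_transpose_mul_self]
    rw [hexp]
    positivity
  have qhigh : ∀ x : EuclideanSpace ℝ (Fin N),
      ⟪x, Matrix.toEuclideanLin MA x⟫ ≤ ⟪x, x⟫ := by
    intro x
    have h := hq x
    have h2 : (0 : ℝ) < n := Nat.cast_pos.mpr hn
    nlinarith [sq_nonneg ‖Matrix.toEuclideanLin AS x‖]
  -- symmetry and spectral decomposition
  have hherm : MA.IsHermitian := by
    rw [Matrix.IsHermitian, Matrix.conjTranspose_eq_transpose_of_trivial, hMA,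
      Matrix.transpose_smul]
    congr 1
    rw [Matrix.transpose_sum]
    refine Finset.sum_congr rfl fun i _ => ?_
    rw [Matrix.transpose_mul, Matrix.transpose_mul, Matrix.transpose_transpose, hPsym,
      Matrix.mul_assoc]
  have hsym : (Matrix.toEuclideanLin MA).IsSymmetric :=
    Matrix.isHermitian_iff_isSymmetric.mp hherm
  have hfr : Module.finrank ℝ (EuclideanSpace ℝ (Fin N)) = N := finrank_euclideanSpace_fin
  set b := hsym.eigenvectorBasis hfr with hbdef
  set μ := hsym.eigenvalues hfr with hμdef
  have horth : ∀ i j, ⟪b i, b j⟫ = if i = j then (1 : ℝ) else 0 :=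
    orthonormal_iff_ite.mp b.orthonormal
  have hbT : ∀ i, Matrix.toEuclideanLin MA (b i) = μ i • b i := by
    intro i
    have h := hsym.apply_eigenvectorBasis hfr i
    exact_mod_cast h
  have hμval : ∀ i, μ i = ⟪b i, Matrix.toEuclideanLin MA (b i)⟫ := by
    intro i
    rw [hbT, real_inner_smul_right, horth]
    simp
  have hμ0 : ∀ i, 0 ≤ μ i := fun i => (hμval i) ▸ qlow (b i)
  have hμ1 : ∀ i, μ i ≤ 1 := by
    intro i
    calc μ i = ⟪b i, Matrix.toEuclideanLin MA (b i)⟫ := hμval i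
      _ ≤ ⟪b i, b i⟫ := qhigh (b i)
      _ = 1 := by rw [horth]; simp
  have hmem : ∀ i, μ i = 1 → b i ∈ K := fun i h =>
    (hfix (b i)).mp (by rw [hbT, h, one_smul])
  have hperp : ∀ i, μ i ≠ 1 → ∀ v ∈ K, ⟪b i, v⟫ = 0 := by
    intro i h v hv
    have hv' : Matrix.toEuclideanLin MA v = v := (hfix v).mpr hv
    have h1 : μ i * ⟪b i, v⟫ = ⟪b i, v⟫ := by
      calc μ i * ⟪b i, v⟫ = ⟪μ i • b i, v⟫ := (real_inner_smul_left _ _ _).symm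
        _ = ⟪Matrix.toEuclideanLin MA (b i), v⟫ := by rw [hbT]
        _ = ⟪b i, Matrix.toEuclideanLin MA v⟫ := hsym _ _
        _ = ⟪b i, v⟫ := by rw [hv']
    by_contra hne
    exact h (mul_right_cancel₀ hne (by rw [h1, one_mul]))
  -- rank-one pieces
  set Q : Fin N → (EuclideanSpace ℝ (Fin N) →L[ℝ] EuclideanSpace ℝ (Fin N)) :=
    fun i => (innerSL ℝ (b i)).smulRight (b i) with hQdef
  have hQapp : ∀ i x, Q i x = ⟪b i, x⟫ • b i := fun i x => rfl
  have hCLMapp : ∀ x : EuclideanSpace ℝ (Fin N),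
      Matrix.toEuclideanCLM (𝕜 := ℝ) MA x = Matrix.toEuclideanLin MA x := fun x =>
    LinearMap.congr_fun (Matrix.coe_toEuclideanCLM_eq_toEuclideanLin MA) x
  have hTkC : ∀ (k : ℕ) (j : Fin N),
      (Matrix.toEuclideanCLM (𝕜 := ℝ) MA ^ k) (b j) = (μ j ^ k) • b j := by
    intro k j
    induction k with
    | zero => simp
    | succ k ih =>
      rw [pow_succ, ContinuousLinearMap.mul_apply, hCLMapp, hbT,
        ContinuousLinearMap.map_smul, ih, smul_smul, ← pow_succ']
  have hFk : ∀ k : ℕ, (Matrix.toEuclideanCLM (𝕜 := ℝ) (MA ^ k))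
      = ∑ i, (μ i ^ k) • Q i := by
    intro k
    apply ContinuousLinearMap.coe_injective
    apply b.toBasis.ext
    intro j
    rw [map_pow]
    simp only [OrthonormalBasis.coe_toBasis, ContinuousLinearMap.coe_coe,
      ContinuousLinearMap.coe_sum', Finset.sum_apply, ContinuousLinearMap.coe_smul',
      Pi.smul_apply]
    rw [hTkC k j]
    have hQb : ∀ i, Q i (b j) = (if i = j then (1:ℝ) else 0) • b i := by
      intro i
      rw [hQapp, horth]
    rw [Finset.sum_congr rfl fun i _ => by rw [hQb i]]
    rw [Finset.sum_eq_single j]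
    · simp
    · intro i _ hi
      simp [hi]
    · intro h; exact absurd (Finset.mem_univ _) h
  have hProjeq : (K.subtypeL.comp (Submodule.orthogonalProjection K))
      = ∑ i, (if μ i = 1 then (1 : ℝ) else 0) • Q i := by
    refine ContinuousLinearMap.ext fun x => ?_
    simp only [ContinuousLinearMap.comp_apply, Submodule.subtypeL_apply,
      ContinuousLinearMap.sum_apply, ContinuousLinearMap.smul_apply]
    refine Submodule.eq_starProjection_of_mem_of_inner_eq_zero (K := K) ?_ ?_
    · refine Submodule.sum_mem _ fun i _ => ?_
      by_cases h : μ i = 1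
      · rw [if_pos h, one_smul, hQapp]
        exact Submodule.smul_mem _ _ (hmem i h)
      · rw [if_neg h, zero_smul]
        exact Submodule.zero_mem _
    · intro w hw
      rw [inner_sub_left, sub_eq_zero]
      have hx : ⟪x, w⟫ = ∑ i, ⟪b i, x⟫ * ⟪b i, w⟫ := by
        conv_lhs => rw [← b.sum_repr' x]
        rw [sum_inner]
        refine Finset.sum_congr rfl fun i _ => ?_
        rw [real_inner_smul_left]
      rw [hx, sum_inner]
      refine Finset.sum_congr rfl fun i _ => ?_
      by_cases h : μ i = 1
      · rw [if_pos h, one_smul, hQapp, real_inner_smul_left]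
      · rw [if_neg h, zero_smul, inner_zero_left, hperp i h w hw, mul_zero]
  have htend : Filter.Tendsto (fun k => Matrix.toEuclideanCLM (𝕜 := ℝ) (MA ^ k)) Filter.atTop
      (nhds (K.subtypeL.comp (Submodule.orthogonalProjection K))) := by
    rw [hProjeq]
    simp only [hFk]
    refine tendsto_finset_sum _ fun i _ => ?_
    refine Filter.Tendsto.smul_const ?_ (Q i)
    by_cases h : μ i = 1
    · rw [if_pos h, h]
      exact tendsto_const_nhds.congr fun k => (one_pow k).symm
    · rw [if_neg h]
      exact tendsto_pow_atTop_nhds_zero_of_lt_one (hμ0 i) (lt_of_le_of_ne (hμ1 i) h)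
  refine ⟨htend, fun y => ?_⟩
  have hy := ((ContinuousLinearMap.apply ℝ (EuclideanSpace ℝ (Fin N)) y).continuous.tendsto
    _).comp htend
  exact hy

end
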